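/- For 1/3 \le r \le 1/\sqrt{2}, the maximum over a \in [0,1] of a + r(1-a^2)/(1 - r a) equals (3 - 2\sqrt{2}\sqrt{1-r^2})/r, and it is attained at a = (1 - \sqrt{(1-r^2)/2})/r. -/

import Mathlib

set_option maxHeartbeats 800000


/-- Optimization lemma: for `1/3 ≤ r ≤ 1/√2`, the maximum over `a ∈ [0,1]` of
`a + r(1-a²)/(1-ra)` equals `(3 - 2√2√(1-r²))/r`, attained at `a = (1 - √((1-r²)/2))/r`. -/
theorem stmt_8 (r : ℝ) (hr1 : 1 / 3 ≤ r) (hr2 : r ≤ 1 / Real.sqrt 2) :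
    IsGreatest {y : ℝ | ∃ a ∈ Set.Icc (0 : ℝ) 1, y = a + r * (1 - a ^ 2) / (1 - r * a)}
      ((3 - 2 * Real.sqrt 2 * Real.sqrt (1 - r ^ 2)) / r) ∧
    (1 - Real.sqrt ((1 - r ^ 2) / 2)) / r ∈ Set.Icc (0 : ℝ) 1 ∧
    (1 - Real.sqrt ((1 - r ^ 2) / 2)) / r +
        r * (1 - ((1 - Real.sqrt ((1 - r ^ 2) / 2)) / r) ^ 2) /
          (1 - r * ((1 - Real.sqrt ((1 - r ^ 2) / 2)) / r)) =
      (3 - 2 * Real.sqrt 2 * Real.sqrt (1 - r ^ 2)) / r := by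
  have hr0 : (0:ℝ) < r := lt_of_lt_of_le (by norm_num) hr1
  have hsqrt2 : (0:ℝ) < Real.sqrt 2 := Real.sqrt_pos.2 (by norm_num)
  have hsq2 : (Real.sqrt 2)^2 = 2 := Real.sq_sqrt (by norm_num)
  have hr2' : r * Real.sqrt 2 ≤ 1 := by
    rw [← le_div_iff₀ hsqrt2]
    simpa [one_div] using hr2
  have hrsq : r^2 ≤ 1/2 := by nlinarith
  have hrlt1 : r < 1 := by nlinarith
  set s := Real.sqrt ((1 - r ^ 2) / 2) with hs_def
  have hs_nonneg : 0 ≤ s := Real.sqrt_nonneg _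
  have hs_sq : s^2 = (1 - r^2)/2 := Real.sq_sqrt (by nlinarith)
  have hs_pos : 0 < s := by nlinarith
  have hs_le : s ≤ 1 := by nlinarith
  have hs_ge : 1 - r ≤ s := by nlinarith [sq_nonneg (s - (1 - r))]
  have key : 2 * Real.sqrt 2 * Real.sqrt (1 - r ^ 2) = 4 * s := by
    have h1 : Real.sqrt 2 * Real.sqrt (1 - r ^ 2) = Real.sqrt (2 * (1 - r ^ 2)) :=
      (Real.sqrt_mul (by norm_num) _).symm
    have h2 : (2 * (1 - r ^ 2)) = (2 * s)^2 := by nlinarith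
    rw [mul_assoc, h1, h2, Real.sqrt_sq (by positivity)]
    ring
  have hmem : (1 - s) / r ∈ Set.Icc (0:ℝ) 1 := by
    constructor
    · apply div_nonneg (by linarith) hr0.le
    · rw [div_le_one hr0]; linarith
  have hval : (1 - s) / r + r * (1 - ((1 - s) / r) ^ 2) / (1 - r * ((1 - s) / r)) =
      (3 - 2 * Real.sqrt 2 * Real.sqrt (1 - r ^ 2)) / r := by
    rw [key]
    have h1 : 1 - r * ((1 - s) / r) = s := by field_simp; ring
    rw [h1]
    field_simp
    linear_combination 2*hs_sq
  refine ⟨⟨⟨(1 - s)/r, hmem, hval.symm⟩, ?_⟩, hmem, hval⟩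
  rintro y ⟨a, ⟨ha0, ha1⟩, rfl⟩
  rw [key]
  have hden : 0 < 1 - r * a := by nlinarith
  have e : a + r * (1 - a ^ 2) / (1 - r * a) =
      (a * (1 - r * a) + r * (1 - a ^ 2)) / (1 - r * a) := by
    rw [eq_div_iff hden.ne', add_mul, div_mul_cancel₀ _ hden.ne']
  rw [e, div_le_div_iff₀ hden hr0]
  nlinarith [sq_nonneg (r * a - (1 - s)), hs_sq]
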